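/- Let u ∈ ℝ³ be a unit vector and let w ∈ ℂ³ satisfy u × w = i·w, where × denotes the ℂ-bilinear extension of the cross product to ℂ³. Fix ε_k ∈ {±1} and r_k > 0 for 1 ≤ k ≤ n. For c ∈ ℂⁿ define δ ∈ (ℂ³)ⁿ by δ_k = c_k w, and let Ã_{ij}(δ) ∈ (ℂ³)ⁿ have i-th component ε_j r_j (u × δ_i) − ε_i r_i (u × δ_j), j-th component ε_i r_i (u × δ_j) − ε_j r_j (u × δ_i), and all other components 0 (the complexified linearization of the bending field B_{ij}). Then for every k, Ã_{ij}(δ)_k = i · (c · J_{ij}(μ))_k · w, where μ = (ε_1 r_1, …, ε_n r_n), J_{ij}(μ) is the Jordan–Pochhammer matrix with these real parameters, and c · J denotes right multiplication of the row vector c by J. That is, on the +i-eigenspace of the almost complex structure δ ↦ (u × δ_k)_k, the linearized bending operator Ã_{ij} acts as √−1 · J_{ij}(ε_i r_i, ε_j r_j). -/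
import Mathlib


open Matrix

/-- The Jordan–Pochhammer matrix `J_{ij}(λ)`. -/
def JP (n : ℕ) (lam : Fin n → ℂ) (i j : Fin n) : Matrix (Fin n) (Fin n) ℂ :=
  if i = j then 0 else
    Matrix.of fun a b =>
      if a = i ∧ b = i then lam j
      else if a = i ∧ b = j then - lam j
      else if a = j ∧ b = i then - lam i
      else if a = j ∧ b = j then lam i
      else 0

/-- The complexified linearization `Ã_{ij}` of the bending field `B_{ij}` at the
degenerate configuration with data `a_k = ε_k r_k` along the (complexified) axis `u`. -/
def AtildeC (n : ℕ) (u : Fin 3 → ℂ) (a : Fin n → ℂ) (i j : Fin n)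
    (δ : Fin n → Fin 3 → ℂ) : Fin n → Fin 3 → ℂ :=
  fun k =>
    if k = i then a j • crossProduct u (δ i) - a i • crossProduct u (δ j)
    else if k = j then a i • crossProduct u (δ j) - a j • crossProduct u (δ i)
    else 0

lemma vecMul_JP (n : ℕ) (lam : Fin n → ℂ) (i j : Fin n) (hne : i ≠ j) (c : Fin n → ℂ)
    (k : Fin n) :
    Matrix.vecMul c (JP n lam i j) k =
      if k = i then c i * lam j - c j * lam i
      else if k = j then c j * lam i - c i * lam j else 0 := by
  simp only [Matrix.vecMul, dotProduct, JP, if_neg hne, Matrix.of_apply]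
  rw [← Finset.sum_subset (Finset.subset_univ ({i, j} : Finset (Fin n)))]
  · rw [Finset.sum_pair hne]
    by_cases hki : k = i
    · simp [hki, hne, hne.symm]; ring
    · by_cases hkj : k = j
      · simp [hkj, hki, hne, hne.symm]; ring
      · simp [hki, hkj, Ne.symm hki, Ne.symm hkj]
  · intro m _ hm
    have h : m ≠ i ∧ m ≠ j := by
      constructor <;> intro h <;> exact hm (by simp [h])
    simp [h.1, h.2]

/-- On the `+i`-eigenspace of the almost complex structure `δ ↦ (u × δ_k)_k` (spanned by
vectors `δ_k = c_k w` with `u × w = i w`), the linearized bending operator `Ã_{ij}` acts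
as `√−1 ⋅ J_{ij}(ε_i r_i, ε_j r_j)` acting on row vectors `c` on the right. -/
theorem Atilde_acts_as_jordan_pochhammer (n : ℕ) (u : Fin 3 → ℝ) (hu : u ⬝ᵥ u = 1)
    (w : Fin 3 → ℂ) (hw : crossProduct (fun a => (u a : ℂ)) w = Complex.I • w)
    (eps r : Fin n → ℝ) (heps : ∀ k, eps k = 1 ∨ eps k = -1) (hr : ∀ k, 0 < r k)
    (i j : Fin n) (hij : i < j) (c : Fin n → ℂ) :
    ∀ k, AtildeC n (fun a => (u a : ℂ)) (fun m => ((eps m * r m : ℝ) : ℂ)) i j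
        (fun m => c m • w) k =
      (Complex.I * Matrix.vecMul c (JP n (fun m => ((eps m * r m : ℝ) : ℂ)) i j) k) • w := by
  intro k
  have hne : i ≠ j := ne_of_lt hij
  set μ : Fin n → ℂ := fun m => ((eps m * r m : ℝ) : ℂ) with hμ
  rw [vecMul_JP n μ i j hne c k]
  by_cases hki : k = i
  · simp only [AtildeC, hki, if_pos rfl, if_true, _root_.map_smul, hw, smul_smul, ← sub_smul]
    congr 1; ring
  · by_cases hkj : k = j
    · simp only [AtildeC, hkj, if_neg (Ne.symm hne), if_pos rfl, if_true, _root_.map_smul, hw, smul_smul,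
        ← sub_smul]
      congr 1; ring
    · simp [AtildeC, hki, hkj]
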